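/- Let M and N be symmetric nonnegative definite matrices. If M and N commute, then Tr(√M √N) = Tr(√(MN)). In particular, for U strictly positive definite, Tr(U + (−R)U⁻¹) ≥ 2 Tr √(−R) whenever −R is nonnegative definite, and equality holds iff U = √(−R). -/

import Mathlib

open Matrix

namespace Matrix.PosSemidef

open scoped ComplexOrder

/-- The positive semidefinite square root of a positive semidefinite matrix
(removed from Mathlib; reinstated with its December 2024 definition). -/
noncomputable def sqrt {n 𝕜 : Type*} [Fintype n] [DecidableEq n] [RCLike 𝕜]
    {A : Matrix n n 𝕜} (hA : A.PosSemidef) : Matrix n n 𝕜 :=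
  hA.1.eigenvectorUnitary.1 * diagonal ((↑) ∘ Real.sqrt ∘ hA.1.eigenvalues) *
  (star hA.1.eigenvectorUnitary : Matrix n n 𝕜)

end Matrix.PosSemidef

namespace Matrix.PosSemidef

lemma sqrt_eq_cfc {n : ℕ} {A : Matrix (Fin n) (Fin n) ℝ} (hA : A.PosSemidef) :
    hA.sqrt = cfc Real.sqrt A := by
  rw [Matrix.IsHermitian.cfc_eq hA.1, IsHermitian.cfc, Unitary.conjStarAlgAut_apply]; rfl

lemma spec_nonneg {n : ℕ} {A : Matrix (Fin n) (Fin n) ℝ} (hA : A.PosSemidef) :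
    ∀ x ∈ spectrum ℝ A, 0 ≤ x := by
  rw [hA.1.spectrum_real_eq_range_eigenvalues]
  rintro _ ⟨i, rfl⟩
  exact hA.eigenvalues_nonneg i

lemma sqrt_mul_self {n : ℕ} {A : Matrix (Fin n) (Fin n) ℝ} (hA : A.PosSemidef) :
    hA.sqrt * hA.sqrt = A := by
  have hsa : IsSelfAdjoint A := hA.1
  rw [sqrt_eq_cfc, ← cfc_mul Real.sqrt Real.sqrt A]
  conv_rhs => rw [← cfc_id' ℝ A hsa]
  apply cfc_congr
  intro x hx
  exact Real.mul_self_sqrt (hA.spec_nonneg x hx)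

lemma posSemidef_sqrt {n : ℕ} {A : Matrix (Fin n) (Fin n) ℝ} (hA : A.PosSemidef) :
    hA.sqrt.PosSemidef := by
  have hD : (diagonal ((↑) ∘ Real.sqrt ∘ hA.1.eigenvalues) : Matrix (Fin n) (Fin n) ℝ).PosSemidef :=
    posSemidef_diagonal_iff.mpr fun i => Real.sqrt_nonneg _
  have := hD.mul_mul_conjTranspose_same (hA.1.eigenvectorUnitary.1)
  unfold sqrt
  convert this using 1
  rfl

lemma eq_sqrt_of_sq_eq {n : ℕ} {B A : Matrix (Fin n) (Fin n) ℝ} (hB : B.PosSemidef)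
    (hA : A.PosSemidef) (h : B ^ 2 = A) : B = hA.sqrt := by
  have hsa : IsSelfAdjoint B := hB.1
  subst h
  rw [sqrt_eq_cfc, ← cfc_comp_pow Real.sqrt 2 B (ha := hsa)]
  conv_lhs => rw [← cfc_id' ℝ B hsa]
  apply cfc_congr
  intro x hx
  exact (Real.sqrt_sq (hB.spec_nonneg x hx)).symm

end Matrix.PosSemidef

open Matrix Polynomial

lemma comm_aeval' {n : ℕ} {A B : Matrix (Fin n) (Fin n) ℝ} (h : Commute A B) (p : ℝ[X]) :
    Commute A (aeval B p) := by
  induction p using Polynomial.induction_on' with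
  | add p q hp hq => simpa [map_add] using hp.add_right hq
  | monomial k a =>
    simp only [aeval_monomial]
    exact (Algebra.commute_algebraMap_right a A).mul_right (h.pow_right k)

open scoped Classical in
lemma sqrt_eq_aeval' {n : ℕ} {A : Matrix (Fin n) (Fin n) ℝ} (hA : A.PosSemidef) :
    ∃ p : ℝ[X], hA.sqrt = aeval A p := by
  set s : Finset ℝ := Finset.univ.image hA.1.eigenvalues
  refine ⟨Lagrange.interpolate s id Real.sqrt, ?_⟩
  have h1 : hA.sqrt = cfc Real.sqrt A := by
    rw [Matrix.IsHermitian.cfc_eq hA.1]; rfl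
  rw [h1, ← cfc_polynomial (Lagrange.interpolate s id Real.sqrt) A hA.1]
  apply cfc_congr
  intro x hx
  rw [hA.1.spectrum_real_eq_range_eigenvalues] at hx
  obtain ⟨i, rfl⟩ := hx
  exact (Lagrange.eval_interpolate_at_node _ (Set.injOn_id _)
    (Finset.mem_image_of_mem _ (Finset.mem_univ i))).symm

lemma commute_sqrt' {n : ℕ} {A B : Matrix (Fin n) (Fin n) ℝ} (hB : B.PosSemidef)
    (h : Commute A B) : Commute A hB.sqrt := by
  obtain ⟨p, hp⟩ := sqrt_eq_aeval' hB
  rw [hp]; exact comm_aeval' h p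

lemma psd_trace_nonneg' {n : ℕ} {K : Matrix (Fin n) (Fin n) ℝ} (hK : K.PosSemidef) :
    0 ≤ K.trace := by
  exact hK.trace_nonneg

lemma psd_trace_eq_zero' {n : ℕ} {K : Matrix (Fin n) (Fin n) ℝ} (hK : K.PosSemidef)
    (h : K.trace = 0) : K = 0 := by
  set B := hK.sqrt with hBdef
  have hBB : B * B = K := hK.sqrt_mul_self
  have hBH : Bᵀ = B := hK.posSemidef_sqrt.1
  have htr : K.trace = ∑ j, ∑ i, B i j * B i j := by
    rw [← hBB, Matrix.trace]
    refine Finset.sum_congr rfl fun j _ => ?_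
    simp only [Matrix.diag_apply, Matrix.mul_apply]
    refine Finset.sum_congr rfl fun i _ => ?_
    congr 1
    conv_lhs => rw [← hBH]
    rfl
  rw [htr] at h
  have hB0 : B = 0 := by
    ext i j
    have h1 : ∀ j ∈ Finset.univ, (0:ℝ) ≤ ∑ i, B i j * B i j :=
      fun j _ => Finset.sum_nonneg fun i _ => mul_self_nonneg _
    have h2 := (Finset.sum_eq_zero_iff_of_nonneg h1).mp h j (Finset.mem_univ j)
    have h3 : ∀ i ∈ Finset.univ, (0:ℝ) ≤ B i j * B i j := fun i _ => mul_self_nonneg _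
    have h4 := (Finset.sum_eq_zero_iff_of_nonneg h3).mp h2 i (Finset.mem_univ i)
    simpa using mul_self_eq_zero.mp h4
  rw [← hBB, hB0, Matrix.mul_zero]

/-- If `M` and `N` are commuting symmetric nonnegative definite matrices then
`Tr(√M √N) = Tr(√(MN))`; in particular for `U` positive definite and `-R`
nonnegative definite, `Tr(U + (-R) U⁻¹) ≥ 2 Tr √(-R)`, with equality iff
`U = √(-R)`. -/
theorem stmt7 {m : ℕ} (M N : Matrix (Fin m) (Fin m) ℝ)
    (hM : M.PosSemidef) (hN : N.PosSemidef) (hcomm : M * N = N * M)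
    (hMN : (M * N).PosSemidef) :
    (hM.sqrt * hN.sqrt).trace = hMN.sqrt.trace ∧
    ∀ (U R : Matrix (Fin m) (Fin m) ℝ) (hU : U.PosDef) (hR : (-R).PosSemidef),
      2 * hR.sqrt.trace ≤ (U + (-R) * U⁻¹).trace ∧
      ((U + (-R) * U⁻¹).trace = 2 * hR.sqrt.trace ↔ U = hR.sqrt) := by
  constructor
  · -- part 1
    set S := hM.sqrt with hSdef
    set T := hN.sqrt with hTdef
    have hS : S.PosSemidef := hM.posSemidef_sqrt
    have hT : T.PosSemidef := hN.posSemidef_sqrt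
    have hcMN : Commute M N := hcomm
    have hMT : Commute M T := commute_sqrt' hN hcMN
    have hST : Commute S T := ((commute_sqrt' hM hMT.symm)).symm
    have hSN : Commute S N := (commute_sqrt' hM hcMN.symm).symm
    -- S*T is PosSemidef
    have hSTpsd : (S * T).PosSemidef := by
      obtain ⟨w, hw⟩ := sqrt_eq_aeval' hT
      set W := hT.sqrt with hWdef
      have hWW : W * W = T := hT.sqrt_mul_self
      have hSW : Commute S W := commute_sqrt' hT hST
      have hWH : Wᴴ = W := hT.posSemidef_sqrt.1
      have : S * T = Wᴴ * S * W := by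
        rw [hWH, ← hWW, ← Matrix.mul_assoc, hSW.eq]
      rw [this]
      exact hS.conjTranspose_mul_mul_same W
    have hsq : (S * T) ^ 2 = M * N := by
      have : S * T * (S * T) = S * S * (T * T) := by
        rw [Matrix.mul_assoc, ← Matrix.mul_assoc T S T, ← hST.eq, Matrix.mul_assoc,
          ← Matrix.mul_assoc]
      rw [pow_two, this, hM.sqrt_mul_self, hN.sqrt_mul_self]
    rw [hSTpsd.eq_sqrt_of_sq_eq hMN hsq]
  · -- part 2
    intro U R hU hR
    set S := hR.sqrt with hSdef
    have hS : S.PosSemidef := hR.posSemidef_sqrt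
    have hSS : S * S = -R := hR.sqrt_mul_self
    have hSH : Sᴴ = S := hS.1
    have hUH : Uᴴ = U := hU.1
    have hUinv : (U⁻¹).PosDef := hU.inv
    have hUU : U * U⁻¹ = 1 := Matrix.mul_nonsing_inv U hU.det_pos.ne'.isUnit
    have hUU' : U⁻¹ * U = 1 := Matrix.nonsing_inv_mul U hU.det_pos.ne'.isUnit
    set A := U - S with hAdef
    have hAH : Aᴴ = A := by rw [hAdef, Matrix.conjTranspose_sub, hUH, hSH]
    have hKpsd : (Aᴴ * U⁻¹ * A).PosSemidef := hUinv.posSemidef.conjTranspose_mul_mul_same A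
    have hSU : S * U⁻¹ * U = S := by rw [Matrix.mul_assoc, hUU', Matrix.mul_one]
    have hKexp : Aᴴ * U⁻¹ * A = U - S - S + S * U⁻¹ * S := by
      rw [hAH, hAdef]
      simp only [Matrix.sub_mul, Matrix.mul_sub, ← Matrix.mul_assoc, hUU, hSU,
        Matrix.one_mul]
      abel
    have htrcyc : (S * U⁻¹ * S).trace = ((-R) * U⁻¹).trace := by
      rw [Matrix.trace_mul_cycle, hSS]
    have htr : (U + (-R) * U⁻¹).trace = (Aᴴ * U⁻¹ * A).trace + 2 * S.trace := by
      rw [hKexp, Matrix.trace_add, Matrix.trace_add, Matrix.trace_sub, Matrix.trace_sub,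
        htrcyc]
      ring
    have hKtr : 0 ≤ (Aᴴ * U⁻¹ * A).trace := psd_trace_nonneg' hKpsd
    constructor
    · linarith
    constructor
    · intro h
      have hK0 : Aᴴ * U⁻¹ * A = 0 := by
        apply psd_trace_eq_zero' hKpsd
        linarith
      set P := hUinv.posSemidef.sqrt with hPdef
      have hPP : P * P = U⁻¹ := hUinv.posSemidef.sqrt_mul_self
      have hPH : Pᴴ = P := hUinv.posSemidef.posSemidef_sqrt.1
      have hPA : (P * A)ᴴ * (P * A) = 0 := by
        rw [Matrix.conjTranspose_mul, hPH, Matrix.mul_assoc, ← Matrix.mul_assoc P P A,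
          hPP, ← Matrix.mul_assoc]
        exact hK0
      have hPA0 : P * A = 0 := Matrix.conjTranspose_mul_self_eq_zero.mp hPA
      have hUA : U⁻¹ * A = 0 := by rw [← hPP, Matrix.mul_assoc, hPA0, Matrix.mul_zero]
      have hA0 : A = 0 := by
        have : U * (U⁻¹ * A) = A := by rw [← Matrix.mul_assoc, hUU, Matrix.one_mul]
        rw [hUA, Matrix.mul_zero] at this
        exact this.symm
      exact sub_eq_zero.mp hA0
    · intro h
      have hU' : S.PosDef := h ▸ hU
      have hSinv : S * S⁻¹ = 1 := Matrix.mul_nonsing_inv S hU'.det_pos.ne'.isUnit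
      rw [h, ← hSS, Matrix.mul_assoc, hSinv, Matrix.mul_one, Matrix.trace_add, two_mul]
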